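/- Let q \ge 2, d \ge 6, j \ge 2, and 1 \le i \le d-3 with j \le d-i-1. Then (43/78) |T_{h_{max}}(i,j)| \le |Q_j(i)| \le (113/78) |T_{h_{max}}(i,j)|, where h_{max} = min(j, d-i) = j. In particular Q_j(i) has the same sign as T_{h_{max}}(i,j). -/

import Mathlib

open Finset

/-- The Gaussian binomial coefficient with (possibly negative) base `b`:
`[m choose l]_b = ∏_{t=1}^{l} (b^{m-t+1}-1)/(b^t-1)`. -/
def gaussBinom (b : ℚ) (m l : ℕ) : ℚ :=
  ∏ t ∈ Finset.range l, (b ^ (m - t) - 1) / (b ^ (t + 1) - 1)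

/-- The `h`-th term of the eigenvalue expression for the Hermitian forms graph `Q_q(d,j)`:
`T_h(i,j) = (-1)^j (-q)^{C(j-h,2)+hd} [d-h, d-j]_b [d-i, h]_b` with `b = -q`. -/
def hermT (q : ℚ) (d i j h : ℕ) : ℚ :=
  (-1 : ℚ) ^ j * (-q) ^ ((j - h).choose 2 + h * d) *
    gaussBinom (-q) (d - h) (d - j) * gaussBinom (-q) (d - i) h

/-- The eigenvalue `Q_j(i)` of the Hermitian forms graph `Q_q(d,j)`. -/
def hermQ (q : ℚ) (d j i : ℕ) : ℚ :=
  ∑ h ∈ Finset.range (min j (d - i) + 1), hermT q d i j h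

lemma prod_shift (b : ℚ) (m l : ℕ) :
    (∏ t ∈ range l, (b ^ (m + 1 - t) - 1)) * (b ^ (m + 1 - l) - 1)
      = (b ^ (m + 1) - 1) * ∏ t ∈ range l, (b ^ (m - t) - 1) := by
  rw [← Finset.prod_range_succ (fun t => (b ^ (m + 1 - t) - 1)) l]
  rw [Finset.prod_range_succ' (fun t => (b ^ (m + 1 - t) - 1)) l]
  simp only [Nat.add_sub_cancel_left, Nat.sub_zero]
  rw [mul_comm]
  congr 1
  apply Finset.prod_congr rfl
  intro t ht
  congr 2
  omega

lemma gauss_step_top (b : ℚ) (m l : ℕ) :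
    gaussBinom b (m + 1) l * (b ^ (m + 1 - l) - 1)
      = gaussBinom b m l * (b ^ (m + 1) - 1) := by
  unfold gaussBinom
  rw [Finset.prod_div_distrib, Finset.prod_div_distrib, div_mul_eq_mul_div,
    div_mul_eq_mul_div, prod_shift, mul_comm (b ^ (m+1) - 1)]

lemma abs_negq_pow (q : ℚ) (hq : 0 ≤ q) (k : ℕ) : |(-q) ^ k| = q ^ k := by
  rw [abs_pow, abs_neg, abs_of_nonneg hq]

lemma A_lower (q : ℚ) (hq : 0 ≤ q) (k : ℕ) : q ^ k - 1 ≤ |(-q) ^ k - 1| := by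
  calc q ^ k - 1 = |(-q) ^ k| - |(1:ℚ)| := by rw [abs_negq_pow q hq, abs_one]
  _ ≤ |(-q) ^ k - 1| := abs_sub_abs_le_abs_sub _ _

lemma A_upper (q : ℚ) (hq : 0 ≤ q) (k : ℕ) : |(-q) ^ k - 1| ≤ q ^ k + 1 := by
  calc |(-q) ^ k - 1| ≤ |(-q) ^ k| + |(1:ℚ)| := abs_sub _ _
  _ = q ^ k + 1 := by rw [abs_negq_pow q hq, abs_one]

lemma A_pos (q : ℚ) (hq : 2 ≤ q) (k : ℕ) (hk : 1 ≤ k) : 0 < |(-q) ^ k - 1| := by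
  have h1 : (2:ℚ) ≤ q ^ k := by
    calc (2:ℚ) ≤ q := hq
    _ ≤ q ^ k := le_self_pow₀ (by linarith) (by omega)
  linarith [A_lower q (by linarith) k]

lemma A_one (q : ℚ) (hq : 0 ≤ q) : |(-q) ^ 1 - 1| = q + 1 := by
  rw [pow_one]
  rw [show -q - 1 = -(q+1) by ring, abs_neg, abs_of_nonneg (by linarith)]

lemma A_ne_zero (q : ℚ) (hq : 2 ≤ q) (k : ℕ) (hk : 1 ≤ k) : (-q) ^ k - 1 ≠ 0 := by
  intro h
  have := A_pos q hq k hk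
  rw [h, abs_zero] at this
  exact lt_irrefl _ this

lemma gauss_ne_zero (q : ℚ) (hq : 2 ≤ q) (m l : ℕ) (h : l ≤ m) : gaussBinom (-q) m l ≠ 0 := by
  unfold gaussBinom
  rw [Finset.prod_ne_zero_iff]
  intro t ht
  rw [Finset.mem_range] at ht
  exact div_ne_zero (A_ne_zero q hq _ (by omega)) (A_ne_zero q hq _ (by omega))

lemma hermT_rec (q : ℚ) (hq : 2 ≤ q) (d i j h : ℕ) (hhj : h + 1 ≤ j) (hjd : j ≤ d) :
    hermT q d i j (h+1) * ((-q) ^ (d - h) - 1) * ((-q) ^ (h+1) - 1)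
      = hermT q d i j h * (-q) ^ (d - (j - h - 1)) * ((-q) ^ (j - h) - 1) *
        ((-q) ^ (d - i - h) - 1) := by
  have hs : j - h = (j - h - 1) + 1 := by omega
  have hc' : ((j - h - 1) + 1).choose 2 = (j - h - 1).choose 2 + (j - h - 1) := by
    rw [Nat.choose_succ_succ, Nat.choose_one_right]
    exact Nat.add_comm _ _
  rw [← hs] at hc'
  have e1 : ((j - (h+1)).choose 2 + (h+1) * d) = ((j - h).choose 2 + h * d) + (d - (j - h - 1)) := by
    rw [show j - (h+1) = j - h - 1 from by omega, add_mul, one_mul]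
    omega
  have p1 : (-q : ℚ) ^ ((j - (h+1)).choose 2 + (h+1) * d)
      = (-q) ^ ((j - h).choose 2 + h * d) * (-q) ^ (d - (j - h - 1)) := by
    rw [e1, pow_add]
  have g1 : gaussBinom (-q) (d - h) (d - j) * ((-q) ^ (j - h) - 1)
      = gaussBinom (-q) (d - (h+1)) (d - j) * ((-q) ^ (d - h) - 1) := by
    have key := gauss_step_top (-q) (d - h - 1) (d - j)
    rw [show d - h - 1 + 1 - (d - j) = j - h from by omega] at key
    rw [show d - h - 1 + 1 = d - h from by omega] at key
    rw [show d - (h+1) = d - h - 1 from by omega]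
    exact key
  have g2 : gaussBinom (-q) (d - i) (h+1)
      = gaussBinom (-q) (d - i) h * (((-q) ^ (d - i - h) - 1) / ((-q) ^ (h+1) - 1)) := by
    unfold gaussBinom; rw [Finset.prod_range_succ]
  have hb : ((-q) ^ (h+1) - 1) ≠ 0 := A_ne_zero q hq _ (by omega)
  unfold hermT
  rw [p1, g2]
  calc (-1:ℚ) ^ j * ((-q) ^ ((j - h).choose 2 + h * d) * (-q) ^ (d - (j - h - 1))) *
        gaussBinom (-q) (d - (h+1)) (d - j) *
        (gaussBinom (-q) (d - i) h * (((-q) ^ (d - i - h) - 1) / ((-q) ^ (h+1) - 1))) *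
        ((-q) ^ (d - h) - 1) * ((-q) ^ (h+1) - 1)
      = (-1:ℚ) ^ j * ((-q) ^ ((j - h).choose 2 + h * d) * (-q) ^ (d - (j - h - 1))) *
        (gaussBinom (-q) (d - (h+1)) (d - j) * ((-q) ^ (d - h) - 1)) *
        gaussBinom (-q) (d - i) h *
        (((-q) ^ (d - i - h) - 1) / ((-q) ^ (h+1) - 1) * ((-q) ^ (h+1) - 1)) := by ring
    _ = (-1:ℚ) ^ j * ((-q) ^ ((j - h).choose 2 + h * d) * (-q) ^ (d - (j - h - 1))) *
        (gaussBinom (-q) (d - h) (d - j) * ((-q) ^ (j - h) - 1)) *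
        gaussBinom (-q) (d - i) h * ((-q) ^ (d - i - h) - 1) := by
        rw [← g1, div_mul_cancel₀ _ hb]
    _ = (-1:ℚ) ^ j * (-q) ^ ((j - h).choose 2 + h * d) * gaussBinom (-q) (d - h) (d - j) *
        gaussBinom (-q) (d - i) h * (-q) ^ (d - (j - h - 1)) * ((-q) ^ (j - h) - 1) *
        ((-q) ^ (d - i - h) - 1) := by ring

lemma core1 (q : ℚ) (hq : 2 ≤ q) : 16*(q^3+1)*(q^2+1) ≤ 5*q^4*(q+1)*(q^2-1) := by
  have h : (0:ℚ) ≤ q - 2 := by linarith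
  nlinarith [pow_nonneg h 2, pow_nonneg h 3, pow_nonneg h 4, pow_nonneg h 5,
    pow_nonneg h 6, pow_nonneg h 7]

lemma core2 (q : ℚ) (hq : 2 ≤ q) : 56*(q^4+1)*(q+1) ≤ 17*q^3*(q^2-1)*(q^3-1) := by
  have h : (0:ℚ) ≤ q - 2 := by linarith
  nlinarith [pow_nonneg h 2, pow_nonneg h 3, pow_nonneg h 4, pow_nonneg h 5,
    pow_nonneg h 6, pow_nonneg h 7, pow_nonneg h 8]

lemma numeric1 (q : ℚ) (hq : 2 ≤ q) (M C P B : ℕ) (hM : 3 ≤ M) (hC : 2 ≤ C)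
    (hB : 2 ≤ B) (hMC : M + C = P + 1) :
    16*(q^M+1)*(q^C+1) ≤ 5*q^P*((q+1)*(q^B-1)) := by
  have hq1 : (1:ℚ) ≤ q := by linarith
  have hq0 : (0:ℚ) < q := by linarith
  obtain ⟨M', rfl⟩ : ∃ M', M = M' + 3 := ⟨M - 3, by omega⟩
  obtain ⟨C', rfl⟩ : ∃ C', C = C' + 2 := ⟨C - 2, by omega⟩
  obtain ⟨B', rfl⟩ : ∃ B', B = B' + 2 := ⟨B - 2, by omega⟩
  obtain rfl : P = M' + C' + 4 := by omega
  have hM1 : (1:ℚ) ≤ q ^ M' := one_le_pow₀ hq1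
  have hC1 : (1:ℚ) ≤ q ^ C' := one_le_pow₀ hq1
  have l1 : q^(M'+3)+1 ≤ q^M' * (q^3+1) := by rw [pow_add]; nlinarith
  have l2 : q^(C'+2)+1 ≤ q^C' * (q^2+1) := by rw [pow_add]; nlinarith
  have lhs_le : 16*(q^(M'+3)+1)*(q^(C'+2)+1) ≤ 16 * (q^M' * q^C') * ((q^3+1)*(q^2+1)) := by
    nlinarith [mul_le_mul l1 l2 (by positivity) (by positivity)]
  have mid : 16 * (q^M' * q^C') * ((q^3+1)*(q^2+1)) ≤ 5 * (q^M' * q^C') * (q^4*((q+1)*(q^2-1))) := by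
    have := core1 q hq
    have hmm : (0:ℚ) ≤ q^M' * q^C' := by positivity
    nlinarith [mul_le_mul_of_nonneg_left this hmm]
  have last : 5 * (q^M' * q^C') * (q^4*((q+1)*(q^2-1))) ≤ 5*q^(M'+C'+4)*((q+1)*(q^(B'+2)-1)) := by
    have h1 : (q:ℚ)^(M'+C'+4) = q^M' * q^C' * q^4 := by rw [pow_add, pow_add]
    have h2' : (q:ℚ)^2 ≤ q^(B'+2) := pow_le_pow_right₀ hq1 (by omega)
    have h2 : (q+1)*(q^2-1) ≤ (q+1)*(q^(B'+2)-1) := by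
      apply mul_le_mul_of_nonneg_left (by linarith) (by linarith)
    rw [h1]
    have hp : (0:ℚ) ≤ 5 * (q^M' * q^C' * q^4) := by positivity
    nlinarith [mul_le_mul_of_nonneg_left h2 hp]
  linarith

lemma numeric2 (q : ℚ) (hq : 2 ≤ q) (M C P A B : ℕ) (hM : 4 ≤ M) (hC : 1 ≤ C)
    (hA : 2 ≤ A) (hB : 3 ≤ B) (hMC : M + C = P + A) :
    56*(q^M+1)*(q^C+1) ≤ 17*q^P*((q^A-1)*(q^B-1)) := by
  have hq1 : (1:ℚ) ≤ q := by linarith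
  have hq0 : (0:ℚ) < q := by linarith
  obtain ⟨M', rfl⟩ : ∃ M', M = M' + 4 := ⟨M - 4, by omega⟩
  obtain ⟨C', rfl⟩ : ∃ C', C = C' + 1 := ⟨C - 1, by omega⟩
  obtain ⟨A', rfl⟩ : ∃ A', A = A' + 2 := ⟨A - 2, by omega⟩
  obtain ⟨B', rfl⟩ : ∃ B', B = B' + 3 := ⟨B - 3, by omega⟩
  have hM1 : (1:ℚ) ≤ q ^ M' := one_le_pow₀ hq1
  have hC1 : (1:ℚ) ≤ q ^ C' := one_le_pow₀ hq1
  have hA1 : (1:ℚ) ≤ q ^ A' := one_le_pow₀ hq1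
  have hB1 : (1:ℚ) ≤ q ^ B' := one_le_pow₀ hq1
  have l1 : q^(M'+4)+1 ≤ q^M' * (q^4+1) := by rw [pow_add]; nlinarith
  have l2 : q^(C'+1)+1 ≤ q^C' * (q+1) := by rw [pow_add]; nlinarith
  have l3 : q^A' * (q^2-1) ≤ q^(A'+2)-1 := by rw [pow_add]; nlinarith
  have l4 : q^B' * (q^3-1) ≤ q^(B'+3)-1 := by rw [pow_add]; nlinarith
  have lhs_le : 56*(q^(M'+4)+1)*(q^(C'+1)+1) ≤ 56 * (q^M' * q^C') * ((q^4+1)*(q+1)) := by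
    nlinarith [mul_le_mul l1 l2 (by positivity) (by positivity)]
  have mid : 56 * (q^M' * q^C') * ((q^4+1)*(q+1)) ≤ 17 * (q^M' * q^C') * (q^3*((q^2-1)*(q^3-1))) := by
    have := core2 q hq
    have hmm : (0:ℚ) ≤ q^M' * q^C' := by positivity
    nlinarith [mul_le_mul_of_nonneg_left this hmm]
  have e1 : (q:ℚ)^(M'+C'+3) = q^M' * q^C' * q^3 := by rw [pow_add, pow_add]
  have e3 : (q:ℚ)^(P+(A'+B')) = q^P * (q^A' * q^B') := by rw [pow_add, pow_add]
  have e2 : (q:ℚ)^(M'+C'+3) ≤ q^(P+(A'+B')) := pow_le_pow_right₀ hq1 (by omega)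
  rw [e1, e3] at e2
  have a2 : (1:ℚ) ≤ q^2 := one_le_pow₀ hq1
  have a3 : (1:ℚ) ≤ q^3 := one_le_pow₀ hq1
  have aA : (1:ℚ) ≤ q^(A'+2) := one_le_pow₀ hq1
  have aB : (1:ℚ) ≤ q^(B'+3) := one_le_pow₀ hq1
  have hq2 : (0:ℚ) ≤ (q^2-1)*(q^3-1) := mul_nonneg (by linarith) (by linarith)
  have last1 : 17 * (q^M' * q^C') * (q^3*((q^2-1)*(q^3-1)))
      ≤ 17 * (q^P * (q^A' * q^B')) * ((q^2-1)*(q^3-1)) := by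
    nlinarith [mul_le_mul_of_nonneg_right e2 hq2]
  have last2 : 17 * (q^P * (q^A' * q^B')) * ((q^2-1)*(q^3-1))
      ≤ 17*q^P*((q^(A'+2)-1)*(q^(B'+3)-1)) := by
    have h2 : (q^A' * (q^2-1)) * (q^B' * (q^3-1)) ≤ (q^(A'+2)-1)*(q^(B'+3)-1) := by
      apply mul_le_mul l3 l4 (mul_nonneg (by positivity) (by linarith)) (by linarith)
    have hp : (0:ℚ) ≤ 17 * q^P := by positivity
    calc 17 * (q^P * (q^A' * q^B')) * ((q^2-1)*(q^3-1))
        = 17*q^P*((q^A' * (q^2-1)) * (q^B' * (q^3-1))) := by ring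
      _ ≤ 17*q^P*((q^(A'+2)-1)*(q^(B'+3)-1)) := mul_le_mul_of_nonneg_left h2 hp
  linarith

lemma abs_hermT_rec (q : ℚ) (hq : 2 ≤ q) (d i j h : ℕ) (hhj : h + 1 ≤ j) (hjd : j ≤ d) :
    |hermT q d i j (h+1)| * (|(-q) ^ (d - h) - 1| * |(-q) ^ (h+1) - 1|)
      = |hermT q d i j h| * (q ^ (d - (j - h - 1)) * (|(-q) ^ (j - h) - 1| *
        |(-q) ^ (d - i - h) - 1|)) := by
  have key := congrArg abs (hermT_rec q hq d i j h hhj hjd)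
  rw [abs_mul, abs_mul, abs_mul, abs_mul, abs_mul, abs_negq_pow q (by linarith)] at key
  linarith [key]

lemma step1 (q : ℚ) (hq : 2 ≤ q) (d i j : ℕ) (hd : 6 ≤ d) (hj : 2 ≤ j)
    (hi1 : 1 ≤ i) (hi2 : i ≤ d - 3) (hji : j ≤ d - i - 1) :
    |hermT q d i j (j-1)| ≤ 5/16 * |hermT q d i j j| := by
  have hq0 : (0:ℚ) ≤ q := by linarith
  have key := abs_hermT_rec q hq d i j (j-1) (by omega) (by omega)
  rw [show j - 1 + 1 = j from by omega] at key
  rw [show j - (j-1) - 1 = 0 from by omega, Nat.sub_zero] at key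
  rw [show j - (j-1) = 1 from by omega, A_one q hq0] at key
  set AM := |(-q) ^ (d - (j-1)) - 1| with hAM
  set AC := |(-q) ^ j - 1| with hAC
  set AB := |(-q) ^ (d - i - (j-1)) - 1| with hAB
  have hABpos : 0 < AB := A_pos q hq _ (by omega)
  have hXpos : 0 < q ^ d * ((q+1) * AB) := by positivity
  have hnum : AM * AC ≤ 5/16 * (q ^ d * ((q+1) * AB)) := by
    have u1 : AM ≤ q ^ (d - (j-1)) + 1 := A_upper q hq0 _
    have u2 : AC ≤ q ^ j + 1 := A_upper q hq0 _
    have l1 : q ^ (d - i - (j-1)) - 1 ≤ AB := A_lower q hq0 _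
    have n1 := numeric1 q hq (d - (j-1)) j d (d - i - (j-1)) (by omega) hj (by omega) (by omega)
    have hACnn : 0 ≤ AC := abs_nonneg _
    have step : AM * AC ≤ (q ^ (d - (j-1)) + 1) * (q ^ j + 1) :=
      mul_le_mul u1 u2 hACnn (by positivity)
    have hstep2 : 5*q^d*((q+1)*(q^(d - i - (j-1))-1)) ≤ 5*q^d*((q+1)*AB) := by
      apply mul_le_mul_of_nonneg_left _ (by positivity)
      apply mul_le_mul_of_nonneg_left (by linarith) (by linarith)
    nlinarith
  have Tnn : 0 ≤ |hermT q d i j j| := abs_nonneg _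
  have final : |hermT q d i j (j-1)| * (q ^ d * ((q+1) * AB))
      ≤ (5/16 * |hermT q d i j j|) * (q ^ d * ((q+1) * AB)) := by
    rw [← key]
    calc |hermT q d i j j| * (AM * AC) ≤ |hermT q d i j j| * (5/16 * (q ^ d * ((q+1) * AB))) :=
          mul_le_mul_of_nonneg_left hnum Tnn
      _ = (5/16 * |hermT q d i j j|) * (q ^ d * ((q+1) * AB)) := by ring
  exact le_of_mul_le_mul_right final hXpos

lemma step2 (q : ℚ) (hq : 2 ≤ q) (d i j h : ℕ) (hd : 6 ≤ d) (hj : 2 ≤ j)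
    (hi1 : 1 ≤ i) (hi2 : i ≤ d - 3) (hji : j ≤ d - i - 1) (hh : h + 2 ≤ j) :
    |hermT q d i j h| ≤ 17/56 * |hermT q d i j (h+1)| := by
  have hq0 : (0:ℚ) ≤ q := by linarith
  have key := abs_hermT_rec q hq d i j h (by omega) (by omega)
  set AM := |(-q) ^ (d - h) - 1| with hAM
  set AC := |(-q) ^ (h+1) - 1| with hAC
  set AA := |(-q) ^ (j - h) - 1| with hAA
  set AB := |(-q) ^ (d - i - h) - 1| with hAB
  have hAApos : 0 < AA := A_pos q hq _ (by omega)
  have hABpos : 0 < AB := A_pos q hq _ (by omega)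
  have hXpos : 0 < q ^ (d - (j - h - 1)) * (AA * AB) := by positivity
  have hnum : AM * AC ≤ 17/56 * (q ^ (d - (j - h - 1)) * (AA * AB)) := by
    have u1 : AM ≤ q ^ (d - h) + 1 := A_upper q hq0 _
    have u2 : AC ≤ q ^ (h+1) + 1 := A_upper q hq0 _
    have l1 : q ^ (j - h) - 1 ≤ AA := A_lower q hq0 _
    have l2 : q ^ (d - i - h) - 1 ≤ AB := A_lower q hq0 _
    have n2 := numeric2 q hq (d - h) (h+1) (d - (j - h - 1)) (j - h) (d - i - h)
      (by omega) (by omega) (by omega) (by omega) (by omega)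
    have hACnn : 0 ≤ AC := abs_nonneg _
    have step : AM * AC ≤ (q ^ (d - h) + 1) * (q ^ (h+1) + 1) :=
      mul_le_mul u1 u2 hACnn (by positivity)
    have hq1 : (1:ℚ) ≤ q := by linarith
    have hA2 : (1:ℚ) ≤ q ^ (j - h) := one_le_pow₀ hq1
    have hB2 : (1:ℚ) ≤ q ^ (d - i - h) := one_le_pow₀ hq1
    have hstep2 : (q ^ (j - h) - 1) * (q ^ (d - i - h) - 1) ≤ AA * AB :=
      mul_le_mul l1 l2 (by linarith) (by linarith)
    have hP : (0:ℚ) ≤ q ^ (d - (j - h - 1)) := by positivity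
    nlinarith [mul_le_mul_of_nonneg_left hstep2 hP]
  have Tnn : 0 ≤ |hermT q d i j (h+1)| := abs_nonneg _
  have final : |hermT q d i j h| * (q ^ (d - (j - h - 1)) * (AA * AB))
      ≤ (17/56 * |hermT q d i j (h+1)|) * (q ^ (d - (j - h - 1)) * (AA * AB)) := by
    rw [← key]
    calc |hermT q d i j (h+1)| * (AM * AC)
        ≤ |hermT q d i j (h+1)| * (17/56 * (q ^ (d - (j - h - 1)) * (AA * AB))) :=
          mul_le_mul_of_nonneg_left hnum Tnn
      _ = (17/56 * |hermT q d i j (h+1)|) * (q ^ (d - (j - h - 1)) * (AA * AB)) := by ring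
  exact le_of_mul_le_mul_right final hXpos

lemma decay (q : ℚ) (hq : 2 ≤ q) (d i j : ℕ) (hd : 6 ≤ d) (hj : 2 ≤ j)
    (hi1 : 1 ≤ i) (hi2 : i ≤ d - 3) (hji : j ≤ d - i - 1) :
    ∀ v, v + 1 ≤ j → |hermT q d i j (j - 1 - v)| ≤ 5/16 * (17/56)^v * |hermT q d i j j| := by
  intro v
  induction v with
  | zero =>
    intro _
    simpa using step1 q hq d i j hd hj hi1 hi2 hji
  | succ v ih =>
    intro hv
    have ih' := ih (by omega)
    have hstep := step2 q hq d i j (j - 2 - v) hd hj hi1 hi2 hji (by omega)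
    rw [show j - 2 - v + 1 = j - 1 - v from by omega] at hstep
    rw [show j - 1 - (v+1) = j - 2 - v from by omega]
    calc |hermT q d i j (j - 2 - v)| ≤ 17/56 * |hermT q d i j (j - 1 - v)| := hstep
      _ ≤ 17/56 * (5/16 * (17/56)^v * |hermT q d i j j|) := by
          apply mul_le_mul_of_nonneg_left ih' (by norm_num)
      _ = 5/16 * (17/56)^(v+1) * |hermT q d i j j| := by ring

lemma sum_bound (q : ℚ) (hq : 2 ≤ q) (d i j : ℕ) (hd : 6 ≤ d) (hj : 2 ≤ j)
    (hi1 : 1 ≤ i) (hi2 : i ≤ d - 3) (hji : j ≤ d - i - 1) :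
    ∑ h ∈ range j, |hermT q d i j h| ≤ 35/78 * |hermT q d i j j| := by
  have hre : ∑ h ∈ range j, |hermT q d i j h|
      = ∑ v ∈ range j, |hermT q d i j (j - 1 - v)| :=
    (Finset.sum_range_reflect (fun h => |hermT q d i j h|) j).symm
  rw [hre]
  have h1 : ∑ v ∈ range j, |hermT q d i j (j - 1 - v)|
      ≤ ∑ v ∈ range j, 5/16 * (17/56)^v * |hermT q d i j j| := by
    apply Finset.sum_le_sum
    intro v hv
    rw [Finset.mem_range] at hv
    exact decay q hq d i j hd hj hi1 hi2 hji v (by omega)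
  have hgeom : ∑ v ∈ range j, ((17:ℚ)/56)^v ≤ 56/39 := by
    rw [geom_sum_eq (by norm_num : (17:ℚ)/56 ≠ 1) j]
    rw [div_le_iff_of_neg (by norm_num : (17/56:ℚ) - 1 < 0)]
    have : (0:ℚ) ≤ (17/56)^j := by positivity
    linarith
  have h2 : ∑ v ∈ range j, 5/16 * (17/56)^v * |hermT q d i j j|
      = 5/16 * |hermT q d i j j| * ∑ v ∈ range j, ((17:ℚ)/56)^v := by
    rw [Finset.mul_sum]
    apply Finset.sum_congr rfl
    intro v _
    ring
  have Tnn : 0 ≤ |hermT q d i j j| := abs_nonneg _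
  have h3 : 5/16 * |hermT q d i j j| * ∑ v ∈ range j, ((17:ℚ)/56)^v
      ≤ 5/16 * |hermT q d i j j| * (56/39) := by
    apply mul_le_mul_of_nonneg_left hgeom (by positivity)
  calc ∑ v ∈ range j, |hermT q d i j (j - 1 - v)|
      ≤ ∑ v ∈ range j, 5/16 * (17/56)^v * |hermT q d i j j| := h1
    _ = 5/16 * |hermT q d i j j| * ∑ v ∈ range j, ((17:ℚ)/56)^v := h2
    _ ≤ 5/16 * |hermT q d i j j| * (56/39) := h3
    _ = 35/78 * |hermT q d i j j| := by ring

theorem hermQ_main_term_bounds (q d i j : ℕ) (hq : 2 ≤ q) (hd : 6 ≤ d)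
    (hj : 2 ≤ j) (hi1 : 1 ≤ i) (hi2 : i ≤ d - 3) (hji : j ≤ d - i - 1) :
    (43 / 78 : ℚ) * |hermT (q : ℚ) d i j j| ≤ |hermQ (q : ℚ) d j i| ∧
    |hermQ (q : ℚ) d j i| ≤ (113 / 78 : ℚ) * |hermT (q : ℚ) d i j j| ∧
    0 < hermQ (q : ℚ) d j i * hermT (q : ℚ) d i j j := by
  have hq' : (2:ℚ) ≤ (q:ℚ) := by exact_mod_cast hq
  have hmin : min j (d - i) = j := min_eq_left (by omega)
  have hQ : hermQ (q:ℚ) d j i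
      = (∑ h ∈ range j, hermT (q:ℚ) d i j h) + hermT (q:ℚ) d i j j := by
    rw [hermQ, hmin, Finset.sum_range_succ]
  set S := ∑ h ∈ range j, hermT (q:ℚ) d i j h with hSdef
  set T := hermT (q:ℚ) d i j j with hTdef
  have hSb : |S| ≤ 35/78 * |T| := by
    calc |S| ≤ ∑ h ∈ range j, |hermT (q:ℚ) d i j h| := Finset.abs_sum_le_sum_abs _ _
      _ ≤ 35/78 * |T| := sum_bound (q:ℚ) hq' d i j hd hj hi1 hi2 hji
  have hTne : T ≠ 0 := by
    rw [hTdef, hermT]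
    have hqne : (-(q:ℚ)) ≠ 0 := neg_ne_zero.mpr (by linarith)
    apply mul_ne_zero
    apply mul_ne_zero
    apply mul_ne_zero
    · exact pow_ne_zero _ (by norm_num)
    · exact pow_ne_zero _ hqne
    · exact gauss_ne_zero (q:ℚ) hq' (d - j) (d - j) le_rfl
    · exact gauss_ne_zero (q:ℚ) hq' (d - i) j (by omega)
  have hTpos : 0 < |T| := abs_pos.mpr hTne
  have habs1 : |T| ≤ |hermQ (q:ℚ) d j i| + |S| := by
    have : T = hermQ (q:ℚ) d j i - S := by rw [hQ]; ring
    rw [this]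
    exact abs_sub _ _
  have habs2 : |hermQ (q:ℚ) d j i| ≤ |S| + |T| := by
    rw [hQ]
    exact abs_add_le _ _
  refine ⟨by linarith, by linarith, ?_⟩
  have e1 : hermQ (q:ℚ) d j i * T = S * T + T * T := by rw [hQ]; ring
  have e2 : -(|S| * |T|) ≤ S * T := by
    rw [← abs_mul]
    exact neg_abs_le _
  have e3 : T * T = |T| * |T| := (abs_mul_abs_self T).symm
  nlinarith [mul_pos hTpos hTpos]
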